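/- If U ⊆ ℂ is a nonempty open connected set symmetric about the origin (i.e., -U = U) and simply connected, then 0 ∈ U. -/

import Mathlib

open Complex Finset Set unitInterval

noncomputable def wsum (γ : ℝ → ℂ) (n : ℕ) : ℝ :=
  ∑ k ∈ Finset.range n, Complex.arg (γ (((k:ℝ)+1)/n) / γ ((k:ℝ)/n))

lemma tele (γ : ℝ → ℂ) (n : ℕ) (hn : 0 < n) (h : ∀ k ≤ n, γ ((k:ℝ)/n) ≠ 0) :
    (‖γ 1‖ : ℂ) * γ 0 * Complex.exp ((wsum γ n : ℝ) * Complex.I)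
      = (‖γ 0‖ : ℂ) * γ 1 := by
  have key : ∀ j ≤ n,
      (‖γ ((j:ℝ)/n)‖ : ℂ) * γ 0 *
        Complex.exp (((∑ k ∈ Finset.range j,
          Complex.arg (γ (((k:ℝ)+1)/n) / γ ((k:ℝ)/n)) : ℝ)) * Complex.I)
        = (‖γ 0‖ : ℂ) * γ ((j:ℝ)/n) := by
    intro j hj
    induction j with
    | zero => simp
    | succ j ih =>
      have hj' : j ≤ n := Nat.le_of_succ_le hj
      have ih' := ih hj'
      have hzj : γ ((j:ℝ)/n) ≠ 0 := h j hj'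
      have hzj1 : γ (((j:ℝ)+1)/n) ≠ 0 := by
        have := h (j+1) hj
        push_cast at this
        exact this
      set zj := γ ((j:ℝ)/n) with hzjdef
      set zj1 := γ (((j:ℝ)+1)/n) with hzj1def
      set r := zj1 / zj with hrdef
      have hr : (‖r‖ : ℂ) * Complex.exp ((Complex.arg r : ℝ) * Complex.I) = r :=
        Complex.norm_mul_exp_arg_mul_I r
      have habs : (‖zj1‖ : ℂ) = (‖r‖ : ℂ) * (‖zj‖ : ℂ) := by
        rw [hrdef, norm_div]
        push_cast
        rw [div_mul_cancel₀]
        exact_mod_cast norm_ne_zero_iff.mpr hzj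
      have hz1 : zj1 = r * zj := by
        rw [hrdef, div_mul_cancel₀ _ hzj]
      have hcast : (((j:ℕ)+1 : ℕ) : ℝ) = (j:ℝ)+1 := by push_cast; ring
      rw [Finset.sum_range_succ, hcast, Complex.ofReal_add, add_mul, Complex.exp_add]
      calc (‖zj1‖ : ℂ) * γ 0 *
            (Complex.exp (((∑ k ∈ Finset.range j,
              Complex.arg (γ (((k:ℝ)+1)/n) / γ ((k:ℝ)/n)) : ℝ)) * Complex.I) *
             Complex.exp ((Complex.arg r : ℝ) * Complex.I))
          = ((‖r‖ : ℂ) * Complex.exp ((Complex.arg r : ℝ) * Complex.I)) *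
            ((‖zj‖ : ℂ) * γ 0 *
              Complex.exp (((∑ k ∈ Finset.range j,
                Complex.arg (γ (((k:ℝ)+1)/n) / γ ((k:ℝ)/n)) : ℝ)) * Complex.I)) := by
            rw [habs]; ring
        _ = r * ((‖γ 0‖ : ℂ) * zj) := by rw [hr, ih']
        _ = (‖γ 0‖ : ℂ) * zj1 := by rw [hz1]; ring
  have := key n le_rfl
  rw [div_self (by exact_mod_cast hn.ne' : (n:ℝ) ≠ 0)] at this
  exact this

lemma re_div_pos {z w : ℂ} (hw : w ≠ 0) (hd : dist z w < ‖w‖) : 0 < (z / w).re := by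
  have h1 : ‖z / w - 1‖ < 1 := by
    rw [div_sub_one hw, norm_div]
    rw [div_lt_one (norm_pos_iff.mpr hw)]
    simpa [Complex.dist_eq] using hd
  have h2 := Complex.abs_re_le_norm (z / w - 1)
  rw [Complex.sub_re, Complex.one_re] at h2
  have h3 := abs_lt.mp (lt_of_le_of_lt h2 h1)
  linarith [h3.1]

lemma wsum_loop (γ : ℝ → ℂ) (n : ℕ) (hn : 0 < n) (h : ∀ k ≤ n, γ ((k:ℝ)/n) ≠ 0)
    (hloop : γ 1 = γ 0) : ∃ k : ℤ, wsum γ n = 2 * Real.pi * k := by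
  have h0 : γ 0 ≠ 0 := by
    have := h 0 (Nat.zero_le n)
    simpa using this
  have ht := tele γ n hn h
  rw [hloop] at ht
  have hC : (‖γ 0‖ : ℂ) * γ 0 ≠ 0 :=
    mul_ne_zero (by exact_mod_cast norm_ne_zero_iff.mpr h0) h0
  have hexp : Complex.exp ((wsum γ n : ℝ) * Complex.I) = 1 := by
    have : (‖γ 0‖ : ℂ) * γ 0 * Complex.exp ((wsum γ n : ℝ) * Complex.I)
        = (‖γ 0‖ : ℂ) * γ 0 * 1 := by rw [mul_one]; exact ht
    exact mul_left_cancel₀ hC this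
  obtain ⟨k, hk⟩ := Complex.exp_eq_one_iff.mp hexp
  refine ⟨k, ?_⟩
  have : ((wsum γ n : ℝ) : ℂ) = ((2 * Real.pi * (k:ℝ) : ℝ) : ℂ) := by
    apply mul_right_cancel₀ Complex.I_ne_zero
    rw [hk]; push_cast; ring
  exact_mod_cast this

set_option maxHeartbeats 1000000 in
/-- A nonempty open connected subset of `ℂ`, symmetric about the origin and
simply connected, must contain `0`. -/
theorem stmt2 (U : Set ℂ) (hne : U.Nonempty) (hopen : IsOpen U)
    (hconn : IsConnected U) (hsymm : -U = U)
    (hsc : SimplyConnectedSpace U) :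
    (0 : ℂ) ∈ U := by
  by_contra h0
  obtain ⟨z₀, hz₀⟩ := hne
  have hz₀' : -z₀ ∈ U := by rw [← hsymm]; simpa using hz₀
  have hz0ne : z₀ ≠ 0 := fun h => h0 (h ▸ hz₀)
  have hU' : ∀ z, z ∈ U → -z ∈ U := by
    intro z hz; rw [← hsymm]; simpa using hz
  have hvmem : ∀ x : U, -(x:ℂ) ∈ U := fun x => hU' _ x.2
  let ν : U → U := fun x => ⟨-(x:ℂ), hvmem x⟩
  have hν : Continuous ν := Continuous.subtype_mk (continuous_subtype_val.neg) _
  set x₀ : U := ⟨z₀, hz₀⟩ with hx₀def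
  set x₁ : U := ⟨-z₀, hz₀'⟩ with hx₁def
  let p' : Path x₀ x₁ := PathConnectedSpace.somePath x₀ x₁
  have hcast1 : x₁ = ν x₀ := Subtype.ext rfl
  have hcast2 : x₀ = ν x₁ := Subtype.ext (neg_neg z₀).symm
  let q' : Path x₁ x₀ := (p'.map hν).cast hcast1 hcast2
  let L : Path x₀ x₀ := p'.trans q'
  have hq' : ∀ t, (q' t : ℂ) = -(p' t : ℂ) := by
    intro t
    show (((p'.map hν).cast hcast1 hcast2) t : ℂ) = _
    rw [show ((p'.map hν).cast hcast1 hcast2) t = (p'.map hν) t from congrFun (Path.cast_coe _ _ _) t]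
    rw [show (p'.map hν) t = ν (p' t) from congrFun (Path.map_coe _ _) t]
  have F := (SimplyConnectedSpace.paths_homotopic L (Path.refl x₀)).some
  let Hf : I × I → ℂ := fun q => (F q : ℂ)
  have HU : ∀ q, Hf q ∈ U := fun q => (F q).2
  have Hne : ∀ q, Hf q ≠ 0 := fun q h => h0 (h ▸ HU q)
  have Hc : Continuous Hf := continuous_subtype_val.comp F.continuous
  have hF0 : ∀ t, Hf (0, t) = (L t : ℂ) := fun t => congrArg Subtype.val (F.apply_zero t)
  have hF1 : ∀ t, Hf (1, t) = z₀ := fun t => congrArg Subtype.val (F.apply_one t)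
  have hFs0 : ∀ s, Hf (s, 0) = z₀ := by
    intro s
    have h1 : F (s, 0) = L 0 := F.eq_fst s (Set.mem_insert _ _)
    have h2 : L 0 = x₀ := L.source
    rw [show Hf (s,0) = ((F (s,0) : U) : ℂ) from rfl, h1, h2]
  have hFs1 : ∀ s, Hf (s, 1) = z₀ := by
    intro s
    have h1 : F (s, 1) = L 1 := F.eq_fst s (Set.mem_insert_iff.mpr (Or.inr rfl))
    have h2 : L 1 = x₀ := L.target
    rw [show Hf (s,1) = ((F (s,1) : U) : ℂ) from rfl, h1, h2]
  -- minimum of |Hf|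
  obtain ⟨q₀, -, hq₀⟩ := isCompact_univ.exists_isMinOn Set.univ_nonempty
    ((continuous_norm.comp Hc).continuousOn)
  set ε := ‖Hf q₀‖ with hεdef
  have hε : 0 < ε := norm_pos_iff.mpr (Hne q₀)
  have hεle : ∀ q, ε ≤ ‖Hf q‖ := fun q => hq₀ (Set.mem_univ q)
  obtain ⟨δ, hδ, hδ'⟩ := Metric.uniformContinuous_iff.mp
    (CompactSpace.uniformContinuous_of_continuous Hc) ε hε
  obtain ⟨N, hN⟩ := exists_nat_gt (1/δ)
  obtain ⟨m, hmdef⟩ : ∃ m : ℕ, m = N + 1 := ⟨_, rfl⟩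
  obtain ⟨n, hndef⟩ : ∃ n : ℕ, n = 2 * m := ⟨_, rfl⟩
  have hmpos : (0:ℕ) < m := by omega
  have hnpos : (0:ℕ) < n := by omega
  have hmR : (0:ℝ) < m := by exact_mod_cast hmpos
  have hnR : (0:ℝ) < n := by exact_mod_cast hnpos
  have hnm : (n:ℝ) = 2 * m := by exact_mod_cast congrArg Nat.cast hndef
  have h1n : 1/(n:ℝ) < δ := by
    rw [div_lt_iff₀ hnR]
    have h2 : 1 < (N:ℝ) * δ := (div_lt_iff₀ hδ).mp hN
    have h3 : (N:ℝ) ≤ n := by exact_mod_cast (by omega : N ≤ n)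
    nlinarith
  let pr : ℝ → I := Set.projIcc 0 1 zero_le_one
  have hpr : ∀ x : ℝ, 0 ≤ x → x ≤ 1 → (pr x : ℝ) = x := by
    intro x h1 h2
    rw [show pr x = Set.projIcc 0 1 zero_le_one x from rfl, Set.projIcc_of_mem zero_le_one ⟨h1, h2⟩]
  have hpr0 : pr 0 = 0 := Subtype.ext (hpr 0 le_rfl zero_le_one)
  have hpr1 : pr 1 = 1 := Subtype.ext (by rw [hpr 1 zero_le_one le_rfl]; rfl)
  let g : I → ℝ → ℂ := fun s_ t => Hf (s_, pr t)
  let w : I → ℝ := fun s_ => wsum (g s_) n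
  have hg0 : ∀ s_, g s_ 0 = z₀ := by intro s_; show Hf (s_, pr 0) = z₀; rw [hpr0]; exact hFs0 s_
  have hg1 : ∀ s_, g s_ 1 = z₀ := by intro s_; show Hf (s_, pr 1) = z₀; rw [hpr1]; exact hFs1 s_
  have hgne : ∀ s_ t, g s_ t ≠ 0 := fun s_ t => Hne _
  -- values in 2πℤ
  have hwz : ∀ s_, ∃ k : ℤ, w s_ = 2 * Real.pi * k := by
    intro s_
    exact wsum_loop (g s_) n hnpos (fun k _ => hgne s_ _) ((hg1 s_).trans (hg0 s_).symm)
  -- continuity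
  have hwc : Continuous w := by
    show Continuous fun s_ : I => ∑ k ∈ Finset.range n,
      Complex.arg (Hf (s_, pr (((k:ℝ)+1)/n)) / Hf (s_, pr ((k:ℝ)/n)))
    apply continuous_finset_sum
    intro k hk
    have hk' : k < n := Finset.mem_range.mp hk
    have hmem_b : (0:ℝ) ≤ (k:ℝ)/n := by positivity
    have hmem_b' : (k:ℝ)/n ≤ 1 := by
      rw [div_le_one hnR]; exact_mod_cast hk'.le
    have hmem_a : (0:ℝ) ≤ ((k:ℝ)+1)/n := by positivity
    have hmem_a' : ((k:ℝ)+1)/n ≤ 1 := by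
      rw [div_le_one hnR]
      have : ((k+1:ℕ):ℝ) ≤ (n:ℝ) := by exact_mod_cast hk'
      push_cast at this; linarith
    set a := pr (((k:ℝ)+1)/n) with hadef
    set b := pr ((k:ℝ)/n) with hbdef
    have hcont_num : Continuous (fun s_ : I => Hf (s_, a)) :=
      Hc.comp (continuous_id.prodMk continuous_const)
    have hcont_den : Continuous (fun s_ : I => Hf (s_, b)) :=
      Hc.comp (continuous_id.prodMk continuous_const)
    have hρ : Continuous (fun s_ : I => Hf (s_, a) / Hf (s_, b)) :=
      hcont_num.div hcont_den (fun s_ => Hne _)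
    have hdistab : dist a b < δ := by
      rw [Subtype.dist_eq, hpr _ hmem_a hmem_a', hpr _ hmem_b hmem_b', Real.dist_eq]
      have he : ((k:ℝ)+1)/n - (k:ℝ)/n = 1/n := by
        rw [div_sub_div_same]; norm_num
      rw [he, abs_of_pos (by positivity)]
      exact h1n
    have hre : ∀ s_ : I, 0 < ((Hf (s_, a) / Hf (s_, b)).re) := by
      intro s_
      apply re_div_pos (Hne _)
      have hd : dist ((s_, a) : I × I) (s_, b) < δ := by
        rw [Prod.dist_eq]
        exact max_lt (by simpa using hδ) hdistab
      calc dist (Hf (s_,a)) (Hf (s_,b)) < ε := hδ' hd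
        _ ≤ ‖Hf (s_,b)‖ := hεle _
    rw [continuous_iff_continuousAt]
    intro s_
    exact ContinuousAt.comp (f := fun s_ : I => Hf (s_, a) / Hf (s_, b))
      (Complex.continuousAt_arg (Complex.mem_slitPlane_iff.mpr (Or.inl (hre s_))))
      hρ.continuousAt
  -- w 1 = 0
  have hw1 : w 1 = 0 := by
    have hconst : ∀ t : ℝ, g 1 t = z₀ := fun t => hF1 (pr t)
    show wsum (g 1) n = 0
    unfold wsum
    apply Finset.sum_eq_zero
    intro k _
    rw [hconst, hconst, div_self hz0ne, Complex.arg_one]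
  -- w 0 = A + A
  let γp : ℝ → ℂ := fun t => (p' (pr t) : ℂ)
  set A := wsum γp m with hAdef
  have hγpne : ∀ t, γp t ≠ 0 := fun t h => h0 (h ▸ (p' (pr t)).2)
  have hγp0 : γp 0 = z₀ := by show (p' (pr 0) : ℂ) = z₀; rw [hpr0, p'.source]
  have hγp1 : γp 1 = -z₀ := by show (p' (pr 1) : ℂ) = -z₀; rw [hpr1, p'.target]
  have hA : Complex.exp ((A:ℝ) * Complex.I) = -1 := by
    have ht := tele γp m hmpos (fun k _ => hγpne _)
    rw [hγp0, hγp1, ← hAdef, norm_neg] at ht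
    have hC : (‖z₀‖ : ℂ) * z₀ ≠ 0 :=
      mul_ne_zero (by exact_mod_cast norm_ne_zero_iff.mpr hz0ne) hz0ne
    apply mul_left_cancel₀ hC
    calc (‖z₀‖ : ℂ) * z₀ * Complex.exp ((A:ℝ) * Complex.I)
        = (‖z₀‖ : ℂ) * (-z₀) := ht
      _ = (‖z₀‖ : ℂ) * z₀ * (-1) := by ring
  have hvlo : ∀ k : ℕ, k ≤ m → g 0 ((k:ℝ)/n) = γp ((k:ℝ)/m) := by
    intro k hk
    have hkR : (k:ℝ) ≤ m := by exact_mod_cast hk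
    have hb0 : (0:ℝ) ≤ (k:ℝ)/n := by positivity
    have hb1 : (k:ℝ)/n ≤ 1 := by
      rw [div_le_one hnR, hnm]; linarith
    have h1 : ((pr ((k:ℝ)/n)) : ℝ) = (k:ℝ)/n := hpr _ hb0 hb1
    have hhalf : ((pr ((k:ℝ)/n)) : ℝ) ≤ 1/2 := by
      rw [h1, hnm, div_le_iff₀ (by positivity)]
      linarith
    show Hf ((0:I), pr ((k:ℝ)/n)) = (p' (pr ((k:ℝ)/m)) : ℂ)
    rw [hF0]
    have hL : L (pr ((k:ℝ)/n)) = p' (pr ((k:ℝ)/m)) := by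
      show (p'.trans q') _ = _
      rw [Path.trans_apply, dif_pos hhalf]
      congr 1
      apply Subtype.ext
      show 2 * ((pr ((k:ℝ)/n)) : ℝ) = ((pr ((k:ℝ)/m)) : ℝ)
      rw [h1, hpr _ (by positivity) (by rw [div_le_one hmR]; exact hkR), hnm]
      field_simp
    rw [hL]
  have hvhi : ∀ k : ℕ, k ≤ m → g 0 (((m+k:ℕ):ℝ)/n) = -γp ((k:ℝ)/m) := by
    intro k hk
    have hkR : (k:ℝ) ≤ m := by exact_mod_cast hk
    have hb0 : (0:ℝ) ≤ ((m+k:ℕ):ℝ)/n := by positivity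
    have hb1 : ((m+k:ℕ):ℝ)/n ≤ 1 := by
      rw [div_le_one hnR]
      exact_mod_cast (by omega : m + k ≤ n)
    have h1 : ((pr (((m+k:ℕ):ℝ)/n)) : ℝ) = ((m+k:ℕ):ℝ)/n := hpr _ hb0 hb1
    have hmk : (0:ℝ) ≤ (k:ℝ)/m := by positivity
    have hmk' : (k:ℝ)/m ≤ 1 := by rw [div_le_one hmR]; exact hkR
    have h2 : ((pr ((k:ℝ)/m)) : ℝ) = (k:ℝ)/m := hpr _ hmk hmk'
    show Hf ((0:I), pr (((m+k:ℕ):ℝ)/n)) = -(p' (pr ((k:ℝ)/m)) : ℂ)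
    rw [hF0]
    by_cases hk0 : k = 0
    · subst hk0
      have hm0 : ((m+0:ℕ):ℝ) = (m:ℝ) := by norm_num
      have hhalf : ((pr (((m+0:ℕ):ℝ)/n)) : ℝ) ≤ 1/2 := by
        rw [h1, hm0, hnm, div_le_iff₀ (by positivity)]
        linarith
      have hL : L (pr (((m+0:ℕ):ℝ)/n)) = p' 1 := by
        show (p'.trans q') _ = _
        rw [Path.trans_apply, dif_pos hhalf]
        congr 1
        apply Subtype.ext
        show 2 * ((pr (((m+0:ℕ):ℝ)/n)) : ℝ) = ((1:I) : ℝ)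
        rw [h1, hm0, hnm, Set.Icc.coe_one]
        field_simp
      rw [hL, p'.target]
      show (-z₀ : ℂ) = -(p' (pr (((0:ℕ):ℝ)/m)) : ℂ)
      rw [show ((0:ℕ):ℝ)/m = (0:ℝ) by norm_num]
      rw [show (p' (pr (0:ℝ)) : ℂ) = z₀ from hγp0]
    · have hk1 : 1 ≤ k := Nat.one_le_iff_ne_zero.mpr hk0
      have hk1R : (1:ℝ) ≤ (k:ℝ) := by exact_mod_cast hk1
      have hhalf : ¬ ((pr (((m+k:ℕ):ℝ)/n)) : ℝ) ≤ 1/2 := by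
        rw [h1, hnm, not_le, lt_div_iff₀ (by positivity)]
        have : ((m+k:ℕ):ℝ) = (m:ℝ) + (k:ℝ) := by push_cast; ring
        rw [this]
        linarith
      have hL : L (pr (((m+k:ℕ):ℝ)/n))
          = q' ⟨2 * ((pr (((m+k:ℕ):ℝ)/n)) : ℝ) - 1, two_mul_sub_one_mem_iff.2
              ⟨(not_le.1 hhalf).le, (pr _).2.2⟩⟩ := by
        show (p'.trans q') _ = _
        rw [Path.trans_apply, dif_neg hhalf]
      rw [hL, hq']
      have harg : 2 * ((pr (((m+k:ℕ):ℝ)/n)) : ℝ) - 1 = ((pr ((k:ℝ)/m)) : ℝ) := by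
        rw [h1, h2, hnm]
        have hmk2 : ((m+k:ℕ):ℝ) = (m:ℝ) + (k:ℝ) := by push_cast; ring
        rw [hmk2]
        field_simp
        ring
      congr 2
      exact congrArg _ (Subtype.ext harg)
  have hw0 : w 0 = A + A := by
    show wsum (g 0) n = A + A
    rw [hAdef]
    unfold wsum
    rw [show Finset.range n = Finset.range (m+m) by rw [hndef, two_mul]]
    rw [Finset.sum_range_add]
    congr 1
    · apply Finset.sum_congr rfl
      intro k hk
      have hk' : k < m := Finset.mem_range.mp hk
      have e1 : g 0 (((k:ℝ)+1)/n) = γp (((k:ℝ)+1)/m) := by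
        have := hvlo (k+1) hk'
        push_cast at this
        exact this
      have e2 : g 0 ((k:ℝ)/n) = γp ((k:ℝ)/m) := hvlo k hk'.le
      rw [e1, e2]
    · apply Finset.sum_congr rfl
      intro k hk
      have hk' : k < m := Finset.mem_range.mp hk
      have e1 : g 0 ((((m+k:ℕ):ℝ)+1)/n) = -γp (((k:ℝ)+1)/m) := by
        have := hvhi (k+1) hk'
        push_cast at this ⊢
        rw [show (m:ℝ) + ((k:ℝ) + 1) = (m:ℝ) + (k:ℝ) + 1 by ring] at this
        exact this
      have e2 : g 0 (((m+k:ℕ):ℝ)/n) = -γp ((k:ℝ)/m) := hvhi k hk'.le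
      push_cast at e1 e2 ⊢
      rw [e1, e2, neg_div_neg_eq]
  -- constancy via IVT
  have hw00 : w 0 = 0 := by
    rcases lt_trichotomy (w 0) 0 with hlt | heq | hgt
    · obtain ⟨k₀, hk₀⟩ := hwz 0
      have hk₀neg : (k₀:ℝ) < 0 := by
        by_contra hcon
        push_neg at hcon
        nlinarith [Real.pi_pos]
      have hk₀le : (k₀:ℝ) ≤ -1 := by
        have h' : k₀ < 0 := by exact_mod_cast hk₀neg
        exact_mod_cast (by omega : k₀ ≤ -1)
      have hmem : -Real.pi ∈ Set.Icc (w 0) (w 1) := by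
        constructor
        · rw [hk₀]; nlinarith [Real.pi_pos]
        · rw [hw1]; linarith [Real.pi_pos]
      obtain ⟨s_, hs_⟩ := intermediate_value_univ (0:I) (1:I) hwc hmem
      obtain ⟨k, hk⟩ := hwz s_
      rw [hs_] at hk
      have : Real.pi * (2 * (k:ℝ) + 1) = 0 := by linarith
      have h2 : (2 * (k:ℝ) + 1) = 0 := by
        rcases mul_eq_zero.mp this with h | h
        · exact absurd h Real.pi_ne_zero
        · exact h
      have : (2 * k + 1 : ℤ) = 0 := by exact_mod_cast h2
      omega
    · exact heq
    · obtain ⟨k₀, hk₀⟩ := hwz 0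
      have hk₀pos : (0:ℝ) < k₀ := by
        by_contra hcon
        push_neg at hcon
        nlinarith [Real.pi_pos]
      have hk₀ge : (1:ℝ) ≤ (k₀:ℝ) := by
        have h' : 0 < k₀ := by exact_mod_cast hk₀pos
        exact_mod_cast (by omega : 1 ≤ k₀)
      have hmem : Real.pi ∈ Set.Icc (w 1) (w 0) := by
        constructor
        · rw [hw1]; linarith [Real.pi_pos]
        · rw [hk₀]; nlinarith [Real.pi_pos]
      obtain ⟨s_, hs_⟩ := intermediate_value_univ (1:I) (0:I) hwc hmem
      obtain ⟨k, hk⟩ := hwz s_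
      rw [hs_] at hk
      have : Real.pi * (2 * (k:ℝ) - 1) = 0 := by linarith
      have h2 : (2 * (k:ℝ) - 1) = 0 := by
        rcases mul_eq_zero.mp this with h | h
        · exact absurd h Real.pi_ne_zero
        · exact h
      have : (2 * k - 1 : ℤ) = 0 := by exact_mod_cast h2
      omega
  have hA0 : A = 0 := by rw [hw0] at hw00; linarith
  rw [hA0] at hA
  rw [Complex.ofReal_zero, zero_mul, Complex.exp_zero] at hA
  norm_num at hA
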